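/- Let c, p_i, p_j ∈ ℝ^D with p_i ≠ p_j, let q = (p_i + p_j)/2 be their midpoint and w = 2/|p_i p_j|. Suppose |p_i c| ≥ |p_j c| and δ(c,p_i,p_j) = (|p_i c| + |p_j c|)/|p_i p_j| ≥ 2/ε − 1 for some 0 < ε < 1. Then w·|q c| ≥ (1 − ε)·δ(c, p_i, p_j). -/

import Mathlib

set_option maxHeartbeats 1000000 in
theorem midpoint_weighted_approx {D : ℕ} (c pi pj : EuclideanSpace ℝ (Fin D))
    (hne : pi ≠ pj) (ε : ℝ) (hε0 : 0 < ε) (hε1 : ε < 1)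
    (hlegs : dist pi c ≥ dist pj c)
    (hdil : (dist pi c + dist pj c) / dist pi pj ≥ 2 / ε - 1) :
    (2 / dist pi pj) * dist (midpoint ℝ pi pj) c
      ≥ (1 - ε) * ((dist pi c + dist pj c) / dist pi pj) := by
  set a := dist pi c with ha
  set b := dist pj c with hb
  set d := dist pi pj with hd
  have hd0 : 0 < d := dist_pos.mpr hne
  have ha0 : 0 ≤ a := dist_nonneg
  have hb0 : 0 ≤ b := dist_nonneg
  -- median length formula
  have key : 4 * dist (midpoint ℝ pi pj) c ^ 2 = 2 * a ^ 2 + 2 * b ^ 2 - d ^ 2 := by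
    have h1 : midpoint ℝ pi pj - c = (2:ℝ)⁻¹ • ((pi - c) + (pj - c)) := by
      rw [midpoint_eq_smul_add, invOf_eq_inv]
      module
    have h2 : dist (midpoint ℝ pi pj) c = (2:ℝ)⁻¹ * ‖(pi - c) + (pj - c)‖ := by
      rw [dist_eq_norm, h1, norm_smul]
      simp
    have h3 := parallelogram_law_with_norm ℝ (pi - c) (pj - c)
    have h4 : (pi - c) - (pj - c) = pi - pj := by abel
    rw [h4] at h3
    rw [h2, ha, hb, hd, dist_eq_norm, dist_eq_norm, dist_eq_norm]
    nlinarith [h3]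
  have hq0' : 0 ≤ dist (midpoint ℝ pi pj) c := dist_nonneg
  obtain ⟨m, hm⟩ : ∃ m, dist (midpoint ℝ pi pj) c = m := ⟨_, rfl⟩
  rw [hm] at key hq0' ⊢
  clear_value a b d
  clear hm hne
  have hs : (2 / ε - 1) * d ≤ a + b := (le_div_iff₀ hd0).mp hdil
  have hdle : d * (2 - ε) ≤ ε * (a + b) := by
    have := mul_le_mul_of_nonneg_left hs (le_of_lt hε0)
    calc d * (2 - ε) = ε * ((2 / ε - 1) * d) := by
          field_simp
      _ ≤ ε * (a + b) := this
  have hd2 : d ^ 2 * (2 - ε) ^ 2 ≤ ε ^ 2 * (a + b) ^ 2 := by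
    nlinarith [hdle, mul_pos hd0 (by linarith : (0:ℝ) < 2 - ε),
      mul_nonneg hε0.le (by linarith : (0:ℝ) ≤ a + b)]
  have h8 : 0 < ε ^ 2 - 5 * ε + 8 := by nlinarith [sq_nonneg ε]
  have haux : 0 ≤ (1 - ε) * ε * (ε ^ 2 - 5 * ε + 8) * (a + b) ^ 2 := by
    apply mul_nonneg
    apply mul_nonneg
    apply mul_nonneg <;> [linarith; exact hε0.le]
    exact h8.le
    exact sq_nonneg _
  have hsq : 4 * m ^ 2 ≥ (1 - ε) ^ 2 * (a + b) ^ 2 := by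
    rw [key]
    nlinarith [hd2, haux, mul_nonneg (sq_nonneg (2 - ε)) (sq_nonneg (a - b))]
  have hq0 : 0 ≤ m := hq0'
  have h1e : 0 ≤ (1 - ε) * (a + b) := mul_nonneg (by linarith) (by linarith)
  have hlin : 2 * m ≥ (1 - ε) * (a + b) := by
    have h2' : ((1 - ε) * (a + b)) ^ 2 ≤ (2 * m) ^ 2 := by
      have e1 : ((1 - ε) * (a + b)) ^ 2 = (1 - ε) ^ 2 * (a + b) ^ 2 := by ring
      have e2 : (2 * m) ^ 2 = 4 * m ^ 2 := by ring
      rw [e1, e2]; linarith [hsq]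
    exact (pow_le_pow_iff_left₀ h1e (by linarith) two_ne_zero).mp h2'
  rw [ge_iff_le,
    show (1 - ε) * ((a + b) / d) = ((1 - ε) * (a + b)) / d from by ring,
    show 2 / d * m = (2 * m) / d from by ring]
  gcongr
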